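/- arXiv:2202.11853 — 3 statements merged into one kernel-verified Lean document; each statement's English description precedes it below -/
import Mathlib

section
/- Let A, E_X, E be independent real random variables with positive, third-order differentiable log-densities f1 = log p_A, f2 = log p_{E_X}, f3 = log p_E. Let q, b, c, d, α, β be real constants with c ≠ 0, β ≠ 0, and qc + bd ≠ 0. Define X = qA + E_X, Ŷ = αA + βX, Y = cX + bdA + E. If Ŷ is conditionally independent of A given Y, then both E_X and E are Gaussian. -/
open MeasureTheory

lemma nonint_affine (p r : ℝ) : ¬ Integrable (fun x => Real.exp (p*x + r)) := by
  intro h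
  rcases le_or_gt 0 p with hp | hp
  · have hs : IntegrableOn (fun _ : ℝ => Real.exp r) (Set.Ici 0) := by
      refine Integrable.mono' h.integrableOn aestronglyMeasurable_const ?_
      filter_upwards [ae_restrict_mem measurableSet_Ici] with x hx
      simp only [Set.mem_Ici] at hx
      rw [Real.norm_eq_abs, abs_of_pos (Real.exp_pos r)]
      exact Real.exp_le_exp.mpr (by nlinarith [mul_nonneg hp hx])
    rcases (integrableOn_const_iff (C := Real.exp r)).mp hs with h0 | hfin
    · simp at h0
    · simp [Real.volume_Ici] at hfin
  · have hs : IntegrableOn (fun _ : ℝ => Real.exp r) (Set.Iic 0) := by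
      refine Integrable.mono' h.integrableOn aestronglyMeasurable_const ?_
      filter_upwards [ae_restrict_mem measurableSet_Iic] with x hx
      simp only [Set.mem_Iic] at hx
      rw [Real.norm_eq_abs, abs_of_pos (Real.exp_pos r)]
      exact Real.exp_le_exp.mpr (by nlinarith [mul_nonneg (neg_nonneg.mpr hp.le) (neg_nonneg.mpr hx)])
    rcases (integrableOn_const_iff (C := Real.exp r)).mp hs with h0 | hfin
    · simp at h0
    · simp [Real.volume_Iic] at hfin

lemma quad_neg (f : ℝ → ℝ) (a b c : ℝ) (hf : ∀ x, f x = a*x^2 + b*x + c)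
    (hd : (∫ x, Real.exp (f x)) = 1) : a < 0 := by
  by_contra h
  push_neg at h
  have hni : ¬ Integrable (fun x => Real.exp (f x)) := by
    intro hi
    apply nonint_affine b c
    refine hi.mono' ((Real.continuous_exp.comp (by continuity)).aestronglyMeasurable) ?_
    filter_upwards with x
    rw [Real.norm_eq_abs, abs_of_pos (Real.exp_pos _)]
    refine Real.exp_le_exp.mpr ?_
    rw [hf]; nlinarith [sq_nonneg x]
  rw [integral_undef hni] at hd
  norm_num at hd

lemma quad_of_dd (f : ℝ → ℝ) (hfd : Differentiable ℝ f) (hfd1 : Differentiable ℝ (deriv f))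
    (k : ℝ) (h : ∀ x, deriv (deriv f) x = k) :
    ∀ x, f x = (k/2)*x^2 + (deriv f 0)*x + f 0 := by
  have h1 : ∀ x, deriv f x = k*x + deriv f 0 := by
    intro x
    have hc : ∀ x y : ℝ, (deriv f x - k*x) = (deriv f y - k*y) := by
      apply is_const_of_deriv_eq_zero
      · exact hfd1.sub (differentiable_id.const_mul k)
      · intro x
        have hd : HasDerivAt (fun x => deriv f x - k*x) (deriv (deriv f) x - k*1) x :=
          ((hfd1 x).hasDerivAt).sub (((hasDerivAt_id x).const_mul k))
        rw [hd.deriv, h x]; ring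
    have := hc x 0
    simp at this
    linarith
  intro x
  have hc : ∀ x y : ℝ, (f x - ((k/2)*x^2 + (deriv f 0)*x)) = (f y - ((k/2)*y^2 + (deriv f 0)*y)) := by
    apply is_const_of_deriv_eq_zero
    · exact hfd.sub (((differentiable_id.pow 2).const_mul _).add (differentiable_id.const_mul _))
    · intro x
      have hq : HasDerivAt (fun x : ℝ => (k/2)*x^2 + (deriv f 0)*x)
          ((k/2)*(2*x^1) + (deriv f 0)*1) x :=
        (((hasDerivAt_pow 2 x).const_mul (k/2)).add ((hasDerivAt_id x).const_mul (deriv f 0)))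
      have hd : HasDerivAt (fun x => f x - ((k/2)*x^2 + (deriv f 0)*x))
          (deriv f x - ((k/2)*(2*x^1) + (deriv f 0)*1)) x := ((hfd x).hasDerivAt).sub hq
      rw [hd.deriv, h1 x]; ring
  have := hc x 0
  simp at this
  linarith

/-- Unattainability of Equalized Odds in the linear non-Gaussian case.
`f1, f2, f3` are the log-densities of the independent variables `A, E_X, E`,
with `X = qA + E_X`, `Ŷ = αA + βX`, `Y = cX + bdA + E`.  The log joint density
of `(A, Ŷ, Y)` is
`J(a,yh,y) = f1 a + f2 (yh/β - αb a) + f3 (y - rb a - cb yh) - log |β|` with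
`αb = (α + qβ)/β`, `rb = bd - cα/β`, `cb = c/β`, and conditional independence of
`Ŷ` and `A` given `Y` is equivalent to the vanishing of the mixed partial
`∂²J/∂a∂yh`.  Under these conditions, both `E_X` and `E` must be Gaussian,
i.e. `f2` and `f3` are quadratic with negative leading coefficients. -/
theorem stmt4 (f1 f2 f3 : ℝ → ℝ) (q b c d α β : ℝ)
    (hc : c ≠ 0) (hβ : β ≠ 0) (hqcbd : q * c + b * d ≠ 0)
    (hf2 : ContDiff ℝ 3 f2) (hf3 : ContDiff ℝ 3 f3)
    (hf2dens : (∫ x, Real.exp (f2 x)) = 1)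
    (hf3dens : (∫ x, Real.exp (f3 x)) = 1)
    (hCI : ∀ a yh y : ℝ,
      deriv (fun a' =>
        deriv (fun t =>
          f1 a' + f2 (t / β - ((α + q * β) / β) * a')
            + f3 (y - (b * d - c * α / β) * a' - (c / β) * t)
            - Real.log |β|) yh) a = 0) :
    (∃ a2 b2 c2 : ℝ, a2 < 0 ∧ ∀ x, f2 x = a2 * x ^ 2 + b2 * x + c2) ∧
    (∃ a3 b3 c3 : ℝ, a3 < 0 ∧ ∀ x, f3 x = a3 * x ^ 2 + b3 * x + c3) := by
  set αb := (α + q * β) / β with hαb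
  set rb := b * d - c * α / β with hrb
  set cb := c / β with hcb
  have hf2d : Differentiable ℝ f2 := hf2.differentiable (by norm_num)
  have hf3d : Differentiable ℝ f3 := hf3.differentiable (by norm_num)
  have hf2d1 : Differentiable ℝ (deriv f2) := by
    have h : ContDiff ℝ (2+1) f2 := by norm_num; exact hf2
    exact (contDiff_succ_iff_deriv.mp h).2.2.differentiable (by norm_num)
  have hf3d1 : Differentiable ℝ (deriv f3) := by
    have h : ContDiff ℝ (2+1) f3 := by norm_num; exact hf3
    exact (contDiff_succ_iff_deriv.mp h).2.2.differentiable (by norm_num)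
  have inner_eq : ∀ a' yh y : ℝ,
      deriv (fun t => f1 a' + f2 (t / β - αb * a') + f3 (y - rb * a' - cb * t)
        - Real.log |β|) yh
      = deriv f2 (yh / β - αb * a') * (1/β) - deriv f3 (y - rb * a' - cb * yh) * cb := by
    intro a' yh y
    have h1 : HasDerivAt (fun t : ℝ => t / β - αb * a') (1/β) yh := by
      simpa using ((hasDerivAt_id yh).div_const β).sub_const (αb * a')
    have h2 : HasDerivAt (fun t => f2 (t / β - αb * a'))
        (deriv f2 (yh / β - αb * a') * (1/β)) yh :=
      (hf2d _).hasDerivAt.comp yh h1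
    have h3 : HasDerivAt (fun t : ℝ => y - rb * a' - cb * t) (-cb) yh := by
      simpa [Pi.sub_def] using (hasDerivAt_const yh (y - rb * a')).sub ((hasDerivAt_id yh).const_mul cb)
    have h4 : HasDerivAt (fun t => f3 (y - rb * a' - cb * t))
        (deriv f3 (y - rb * a' - cb * yh) * (-cb)) yh :=
      (hf3d _).hasDerivAt.comp yh h3
    have h5 : HasDerivAt (fun t => f1 a' + f2 (t / β - αb * a') + f3 (y - rb * a' - cb * t)
          - Real.log |β|)
        (deriv f2 (yh / β - αb * a') * (1/β) + deriv f3 (y - rb * a' - cb * yh) * (-cb)) yh :=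
      ((h2.const_add (f1 a')).add h4).sub_const _
    rw [h5.deriv]; ring
  have key : ∀ a yh y : ℝ,
      deriv (deriv f2) (yh / β - αb * a) * (αb / β)
      = deriv (deriv f3) (y - rb * a - cb * yh) * (rb * cb) := by
    intro a yh y
    have h0 := hCI a yh y
    rw [funext (fun a' => inner_eq a' yh y)] at h0
    have h1 : HasDerivAt (fun a' : ℝ => yh / β - αb * a') (-αb) a := by
      simpa [Pi.sub_def] using (hasDerivAt_const a (yh / β)).sub ((hasDerivAt_id a).const_mul αb)
    have h2 : HasDerivAt (fun a' => deriv f2 (yh / β - αb * a') * (1/β))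
        ((deriv (deriv f2) (yh / β - αb * a) * (-αb)) * (1/β)) a :=
      (((hf2d1 _).hasDerivAt.comp a h1)).mul_const (1/β)
    have h3 : HasDerivAt (fun a' : ℝ => y - rb * a' - cb * yh) (-rb) a := by
      simpa using ((hasDerivAt_const a y).sub ((hasDerivAt_id a).const_mul rb)).sub_const (cb * yh)
    have h4 : HasDerivAt (fun a' => deriv f3 (y - rb * a' - cb * yh) * cb)
        ((deriv (deriv f3) (y - rb * a - cb * yh) * (-rb)) * cb) a :=
      (((hf3d1 _).hasDerivAt.comp a h3)).mul_const cb
    have h5 := (h2.sub h4).deriv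
    simp only [Pi.sub_def] at h5
    rw [h0] at h5
    linear_combination h5
  have master : ∀ U V : ℝ,
      deriv (deriv f2) U * (αb / β) = deriv (deriv f3) V * (rb * cb) := by
    intro U V
    have hk := key 0 (β * U) (V + cb * (β * U))
    have e1 : β * U / β - αb * 0 = U := by field_simp; ring
    have e2 : V + cb * (β * U) - rb * 0 - cb * (β * U) = V := by ring
    rw [e1, e2] at hk
    exact hk
  -- both "coefficients" cannot vanish
  have hK : ¬ (αb / β = 0 ∧ rb * cb = 0) := by
    rintro ⟨h2, h3⟩
    apply hqcbd
    rw [div_eq_zero_iff] at h2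
    have hα : α + q * β = 0 := by
      rcases h2 with h2 | h2
      · rw [hαb, div_eq_zero_iff] at h2; tauto
      · exact absurd h2 hβ
    have hcb0 : cb ≠ 0 := by rw [hcb]; exact div_ne_zero hc hβ
    have hr : rb = 0 := by
      rcases mul_eq_zero.mp h3 with h | h
      · exact h
      · exact absurd h hcb0
    rw [hrb] at hr
    have hβ2 : (q * c + b * d) * β = 0 := by
      have hα' : α = -(q * β) := by linarith
      rw [sub_eq_zero] at hr
      have : b * d * β = c * α := by
        field_simp at hr
        linarith [hr]
      rw [hα'] at this
      ring_nf
      ring_nf at this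
      linarith
    exact (mul_eq_zero.mp hβ2).resolve_right hβ
  have quad2 : ∀ k : ℝ, (∀ x, deriv (deriv f2) x = k) →
      k/2 < 0 ∧ ∀ x, f2 x = (k/2)*x^2 + (deriv f2 0)*x + f2 0 := by
    intro k hk
    have hq := quad_of_dd f2 hf2d hf2d1 k hk
    exact ⟨quad_neg f2 (k/2) _ _ hq hf2dens, hq⟩
  have quad3 : ∀ k : ℝ, (∀ x, deriv (deriv f3) x = k) →
      k/2 < 0 ∧ ∀ x, f3 x = (k/2)*x^2 + (deriv f3 0)*x + f3 0 := by
    intro k hk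
    have hq := quad_of_dd f3 hf3d hf3d1 k hk
    exact ⟨quad_neg f3 (k/2) _ _ hq hf3dens, hq⟩
  have hK2 : αb / β ≠ 0 := by
    intro h2
    by_cases h3 : rb * cb = 0
    · exact hK ⟨h2, h3⟩
    · have hg3 : ∀ V, deriv (deriv f3) V = 0 := by
        intro V
        have := master 0 V
        rw [h2, mul_zero] at this
        exact (mul_eq_zero.mp this.symm).resolve_right h3
      have := (quad3 0 hg3).1
      norm_num at this
  have hK3 : rb * cb ≠ 0 := by
    intro h3
    have hg2 : ∀ U, deriv (deriv f2) U = 0 := by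
      intro U
      have := master U 0
      rw [h3, mul_zero] at this
      exact (mul_eq_zero.mp this).resolve_right hK2
    have := (quad2 0 hg2).1
    norm_num at this
  have hg2c : ∀ U, deriv (deriv f2) U = deriv (deriv f3) 0 * (rb * cb) / (αb / β) := by
    intro U
    exact (eq_div_iff hK2).mpr (master U 0)
  have hg3c : ∀ V, deriv (deriv f3) V = deriv (deriv f2) 0 * (αb / β) / (rb * cb) := by
    intro V
    exact (eq_div_iff hK3).mpr (master 0 V).symm
  obtain ⟨hn2, hq2⟩ := quad2 _ hg2c
  obtain ⟨hn3, hq3⟩ := quad3 _ hg3c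
  exact ⟨⟨_, _, _, hn2, hq2⟩, ⟨_, _, _, hn3, hq3⟩⟩
end

section
/- Under the same linear model with both E_X and E Gaussian with variances σ_{E_X}² and σ_E², the predictor Ŷ = αA + βX (β ≠ 0) is conditionally independent of A given Y if and only if α/β = (bdc·σ_{E_X}² − q·σ_E²)/(c²·σ_{E_X}² + σ_E²). -/
/-- In the linear Gaussian model (`X = qA + E_X`, `Y = cX + bdA + E`,
`Ŷ = αA + βX`, with `E_X`, `E` Gaussian with variances `σX²`, `σE²`),
conditional independence of `Ŷ` and `A` given `Y` is equivalent (for positive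
smooth densities) to `r̄c̄ · f3'' = (ᾱ/β) · f2''` where `f2'' = -1/σX²`,
`f3'' = -1/σE²`, `ᾱ = (α+qβ)/β`, `r̄ = bd - cα/β`, `c̄ = c/β`; this holds iff
`α/β = (bdc·σX² - q·σE²)/(c²·σX² + σE²)`. -/
theorem stmt5 (q b c d α β σX σE : ℝ)
    (hc : c ≠ 0) (hβ : β ≠ 0) (hqcbd : q * c + b * d ≠ 0)
    (hσX : 0 < σX) (hσE : 0 < σE) :
    ((b * d - c * α / β) * (c / β) * (-(1 / σE ^ 2))
        = (((α + q * β) / β) / β) * (-(1 / σX ^ 2))) ↔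
      α / β = (b * d * c * σX ^ 2 - q * σE ^ 2) / (c ^ 2 * σX ^ 2 + σE ^ 2) := by
  have hX : σX ^ 2 ≠ 0 := by positivity
  have hE : σE ^ 2 ≠ 0 := by positivity
  have hden : c ^ 2 * σX ^ 2 + σE ^ 2 ≠ 0 := by positivity
  rw [div_eq_div_iff hβ hden]
  constructor <;> intro h
  · field_simp at h
    apply mul_left_cancel₀ (pow_ne_zero 2 hβ)
    linear_combination β ^ 2 * h
  · field_simp
    linear_combination h
end

section
/- Let Ŷ be a binary predictor of a binary target Y with protected attribute A taking finitely many values. For each a, let γ_a(Ŷ) = (FPR_a, TPR_a) = (P(Ŷ=1|A=a,Y=0), P(Ŷ=1|A=a,Y=1)), and suppose there is ε > 0 such that TPR_a − FPR_a ≥ ε for all a. Let C_a be the convex hull of {(0,0), γ_a(Ŷ), (1,1) − γ_a(Ŷ) reflected appropriately, (1,1)}, i.e., C_a = conv{(0,0), (FPR_a, TPR_a), (1−FPR_a, 1−TPR_a), (1,1)}. Then the intersection ∩_a C_a contains a point (u, v) with v − u > 0, i.e., a point strictly above the diagonal. -/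
/-- If for every group `a` the ROC point `γ a = (FPR_a, TPR_a) ∈ [0,1]²` lies
at least `ε > 0` above the diagonal, then the intersection of the ROC convex
hulls `C_a = conv{(0,0), γ a, (1,1) - γ a, (1,1)}` contains a point strictly
above the diagonal. -/
theorem stmt13 {𝒜 : Type*} [Fintype 𝒜] [Nonempty 𝒜]
    (γ : 𝒜 → ℝ × ℝ) (ε : ℝ) (hε : 0 < ε)
    (hbox : ∀ a, (γ a).1 ∈ Set.Icc (0 : ℝ) 1 ∧ (γ a).2 ∈ Set.Icc (0 : ℝ) 1)
    (hsep : ∀ a, ε ≤ (γ a).2 - (γ a).1) :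
    ∃ p : ℝ × ℝ,
      (∀ a, p ∈ convexHull ℝ
        ({((0 : ℝ), (0 : ℝ)), γ a, ((1 : ℝ), (1 : ℝ)) - γ a,
          ((1 : ℝ), (1 : ℝ))} : Set (ℝ × ℝ))) ∧ p.1 < p.2 := by
  refine ⟨(1/2 - ε/8, 1/2 + ε/8), fun a => ?_, by dsimp; linarith⟩
  obtain ⟨⟨hx0, hx1⟩, ⟨hy0, hy1⟩⟩ := hbox a
  set x := (γ a).1 with hx
  set y := (γ a).2 with hy
  have hyx : 0 < y - x := lt_of_lt_of_le hε (hsep a)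
  set d : ℝ := ε / (4 * (y - x)) with hd
  have hd0 : 0 < d := div_pos hε (by linarith)
  have hd4 : d ≤ 1/4 := by
    rw [hd, div_le_iff₀ (by linarith)]
    have := hsep a
    linarith
  have hdyx : d * (y - x) = ε / 4 := by
    field_simp [hd]
    have : d * (4 * (y - x)) = ε := by rw [hd]; exact div_mul_cancel₀ ε (ne_of_gt (by linarith))
    linear_combination this
  set t : ℝ := (1 - d * (x + y)) / 2 with ht
  have ht14 : 1/4 ≤ t := by
    have h1 : d * (x + y) ≤ 1/2 := by nlinarith
    rw [ht]; linarith
  have ht12 : t ≤ 1/2 := by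
    have h0 : 0 ≤ d * (x + y) := by positivity
    rw [ht]; linarith
  -- weights
  set w : Fin 4 → ℝ := ![5/4 - (2*t + d), t + d - 1/4, t - 1/4, 1/4] with hw
  set z : Fin 4 → ℝ × ℝ := ![((0:ℝ), (0:ℝ)), γ a, ((1:ℝ),(1:ℝ)) - γ a, ((1:ℝ),(1:ℝ))] with hz
  have hmem := Finset.centerMass_mem_convexHull (Finset.univ : Finset (Fin 4))
    (w := w) (z := z)
    (s := ({((0 : ℝ), (0 : ℝ)), γ a, ((1 : ℝ), (1 : ℝ)) - γ a,
      ((1 : ℝ), (1 : ℝ))} : Set (ℝ × ℝ)))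
    (by intro i _; fin_cases i <;> simp [hw] <;> linarith)
    (by simp [hw, Fin.sum_univ_four]; linarith)
    (by intro i _; fin_cases i <;> simp only [hz, Matrix.cons_val_zero, Matrix.cons_val_one, Matrix.head_cons, Matrix.cons_val_two, Matrix.tail_cons, Matrix.cons_val_three] <;> simp [Set.mem_insert_iff])
  have heq : (Finset.univ : Finset (Fin 4)).centerMass w z = (1/2 - ε/8, 1/2 + ε/8) := by
    rw [Finset.centerMass]
    simp only [hw, hz, Fin.sum_univ_four, Matrix.cons_val_zero, Matrix.cons_val_one,
      Matrix.head_cons, Matrix.cons_val_two, Matrix.tail_cons, Matrix.cons_val_three]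
    have hsum : (5/4 - (2*t + d)) + (t + d - 1/4) + (t - 1/4) + (1/4 : ℝ) = 1 := by ring
    rw [hsum]
    rw [inv_one, one_smul]
    ext
    · simp [Prod.smul_def, Prod.add_def, ← hx, ← hy]
      nlinarith [hdyx]
    · simp [Prod.smul_def, Prod.add_def, ← hx, ← hy]
      nlinarith [hdyx]
  rwa [heq] at hmem
end
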